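/- Let S = K_1 ∪ K_2 be the vertex disjoint union of two cliques of weights a_1 and a_2 and orders a_1 + t_1 and a_2 + t_2 respectively, with a_1 = p_1·2^{r_1}, a_2 = p_2·2^{r_2}, t_1, t_2, r_1, r_2 ≥ 0, r_1 ≤ r_2, and p_1, p_2 odd. If r_1 = r_2 then S is 2-Ramsey. -/

import Mathlib

/-- An embedding of the hypercube `Q_d` into `Q_n`: an injective map on vertex sets
(identified with finite subsets of `Fin d`, resp. `Fin n`) preserving the edges,
where two vertices are adjacent iff their symmetric difference has exactly one element. -/
def IsCubeEmbedding {d n : ℕ} (ψ : Finset (Fin d) → Finset (Fin n)) : Prop :=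
  Function.Injective ψ ∧
    ∀ A B : Finset (Fin d), (symmDiff A B).card = 1 → (symmDiff (ψ A) (ψ B)).card = 1

/-- `S ⊆ V_n` contains a copy of `F ⊆ V_d`. -/
def ContainsCopy {d n : ℕ} (F : Set (Finset (Fin d))) (S : Set (Finset (Fin n))) : Prop :=
  ∃ ψ : Finset (Fin d) → Finset (Fin n), IsCubeEmbedding ψ ∧ ∀ A ∈ F, ψ A ∈ S

/-- `F ⊆ V_d` is `t`-Ramsey: for all sufficiently large `n`, every `t`-coloring of `Q_n`
contains a monochromatic copy of `F`. -/
def IsRamsey (t d : ℕ) (F : Set (Finset (Fin d))) : Prop :=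
  ∃ n₀ : ℕ, ∀ n, n₀ ≤ n → ∀ c : Finset (Fin n) → Fin t,
    ∃ i : Fin t, ContainsCopy F {A | c A = i}


theorem my_ramsey (ι : Type) [Fintype ι] [DecidableEq ι] (a : ℕ) :
    ∀ m : ℕ, ∃ n : ℕ, ∀ (A : Finset ℕ), n ≤ A.card → ∀ c : Finset ℕ → ι,
      ∃ H, H ⊆ A ∧ m ≤ H.card ∧ ∃ i, ∀ S ⊆ H, S.card = a → c S = i := by
  induction a with
  | zero =>
    intro m
    refine ⟨m, fun A hA c => ⟨A, subset_rfl, hA, c ∅, fun S _ h0 => ?_⟩⟩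
    rw [Finset.card_eq_zero] at h0; subst h0; rfl
  | succ a ih =>
    have inner : ∀ M : ℕ, ∃ n : ℕ, ∀ (A : Finset ℕ), n ≤ A.card → ∀ c : Finset ℕ → ι,
        ∃ H, H ⊆ A ∧ H.card = M ∧ ∃ φ : ℕ → ι, ∀ S ⊆ H, S.card = a + 1 →
          ∀ x ∈ S, (∀ y ∈ S, x ≤ y) → c S = φ x := by
      intro M
      induction M with
      | zero =>
        refine ⟨0, fun A _ c => ⟨∅, Finset.empty_subset _, Finset.card_empty, fun _ => c ∅, ?_⟩⟩
        intro S hS hcard x hx _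
        simp only [Finset.subset_empty] at hS
        subst hS; simp at hx
      | succ M ihM =>
        obtain ⟨nM, hnM⟩ := ihM
        obtain ⟨nR, hnR⟩ := ih nM
        refine ⟨nR + 1, fun A hA c => ?_⟩
        have hAne : A.Nonempty := Finset.card_pos.mp (by omega)
        set x := A.min' hAne with hx
        have hxA : x ∈ A := A.min'_mem hAne
        set A' := A.erase x with hA'
        have hA'card : nR ≤ A'.card := by
          rw [hA', Finset.card_erase_of_mem hxA]; omega
        obtain ⟨H₁, hH₁A, hH₁card, i_x, hix⟩ := hnR A' hA'card (fun S => c (insert x S))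
        obtain ⟨H₂, hH₂, hH₂card, φ, hφ⟩ := hnM H₁ hH₁card c
        have hxH₂ : x ∉ H₂ := fun h => (Finset.notMem_erase x A) (hH₁A (hH₂ h))
        refine ⟨insert x H₂, ?_, ?_, Function.update φ x i_x, ?_⟩
        · intro y hy
          rcases Finset.mem_insert.mp hy with rfl | hy
          · exact hxA
          · exact Finset.erase_subset x A (hH₁A (hH₂ hy))
        · rw [Finset.card_insert_of_notMem hxH₂, hH₂card]
        · intro S hS hScard xm hxm hmin
          by_cases hxS : x ∈ S
          · have hxmx : xm = x := by
              have h1 : xm ≤ x := hmin x hxS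
              rcases Finset.mem_insert.mp (hS hxm) with h | h
              · exact h
              · exfalso
                have : x < xm := by
                  have hxm' : xm ∈ A' := hH₁A (hH₂ h)
                  have : x ≤ xm := A.min'_le xm (Finset.erase_subset x A hxm')
                  have hne : xm ≠ x := Finset.ne_of_mem_erase hxm'
                  omega
                omega
            have hSx : S.erase x ⊆ H₁ := by
              intro y hy
              have := hS (Finset.erase_subset x S hy)
              rcases Finset.mem_insert.mp this with h | h
              · exact absurd h (Finset.ne_of_mem_erase hy)
              · exact hH₂ h
            have hcx : c (insert x (S.erase x)) = i_x :=
              hix _ hSx (by rw [Finset.card_erase_of_mem hxS, hScard]; omega)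
            rw [Finset.insert_erase hxS] at hcx
            rw [hxmx, hcx, Function.update_self]
          · have hSH₂ : S ⊆ H₂ := by
              intro y hy
              rcases Finset.mem_insert.mp (hS hy) with h | h
              · subst h; exact absurd hy hxS
              · exact h
            have hne : xm ≠ x := fun h => hxS (h ▸ hxm)
            rw [Function.update_of_ne hne _ _]
            exact hφ S hSH₂ hScard xm hxm hmin
    intro m
    obtain ⟨nI, hnI⟩ := inner (Fintype.card ι * m)
    refine ⟨nI, fun A hA c => ?_⟩
    obtain ⟨H, hHA, hHcard, φ, hφ⟩ := hnI A hA c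
    have : Nonempty ι := ⟨c ∅⟩
    have huniv : (Finset.univ : Finset ι).Nonempty := Finset.univ_nonempty
    obtain ⟨i, _, hi⟩ := Finset.exists_le_card_fiber_of_mul_le_card_of_maps_to
      (f := φ) (s := H) (t := Finset.univ) (fun a _ => Finset.mem_univ _) huniv
      (by rw [Finset.card_univ, hHcard])
    refine ⟨H.filter (fun y => φ y = i), fun y hy => hHA (Finset.filter_subset _ _ hy), hi, i, ?_⟩
    intro S hS hScard
    have hSne : S.Nonempty := Finset.card_pos.mp (by omega)
    have := hφ S (hS.trans (Finset.filter_subset _ _)) hScard (S.min' hSne) (S.min'_mem hSne)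
      (fun y hy => S.min'_le y hy)
    rw [this]
    exact (Finset.mem_filter.mp (hS (S.min'_mem hSne))).2


def bottomk (k : ℕ) (S : Finset ℕ) : Finset ℕ :=
  S.filter (fun x => (S.filter (· < x)).card < k)

lemma bottomk_eq {k : ℕ} {S B : Finset ℕ} (hB : B ⊆ S) (hcard : B.card = k)
    (hlt : ∀ b ∈ B, ∀ s ∈ S, s ∉ B → b < s) : bottomk k S = B := by
  ext x
  simp only [bottomk, Finset.mem_filter]
  constructor
  · rintro ⟨hxS, hxk⟩
    by_contra hxB
    have : B ⊆ S.filter (· < x) := fun b hb =>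
      Finset.mem_filter.mpr ⟨hB hb, hlt b hb x hxS hxB⟩
    have := Finset.card_le_card this
    omega
  · intro hxB
    refine ⟨hB hxB, ?_⟩
    have hsub : S.filter (· < x) ⊆ B.erase x := by
      intro s hs
      obtain ⟨hsS, hsx⟩ := Finset.mem_filter.mp hs
      have hsB : s ∈ B := by
        by_contra hsB
        have := hlt x hxB s hsS hsB
        omega
      exact Finset.mem_erase.mpr ⟨by omega, hsB⟩
    have h1 := Finset.card_le_card hsub
    have h2 : (B.erase x).card = k - 1 := by rw [Finset.card_erase_of_mem hxB, hcard]
    have hk : 1 ≤ k := by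
      have := Finset.card_pos.mpr ⟨x, hxB⟩; omega
    omega

theorem homog (K m : ℕ) : ∃ nR : ℕ, ∀ (A : Finset ℕ), nR ≤ A.card →
    ∀ c : Finset ℕ → Fin 2, ∃ L, L ⊆ A ∧ m ≤ L.card ∧
      ∃ φ : ℕ → Fin 2, ∀ B ⊆ L, B.card ≤ K → c B = φ B.card := by
  obtain ⟨nR, hram⟩ := my_ramsey (Fin (K + 1) → Fin 2) K (m + K)
  refine ⟨nR, fun A hA c => ?_⟩
  set c' : Finset ℕ → (Fin (K + 1) → Fin 2) := fun S => fun k => c (bottomk k.val S) with hc'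
  obtain ⟨L0, hL0A, hL0card, φ0, hφ0⟩ := hram A hA c'
  set L : Finset ℕ := L0.filter (fun x => K ≤ (L0.filter (x < ·)).card) with hL
  have hLL0 : L ⊆ L0 := Finset.filter_subset _ _
  have hLcard : m ≤ L.card := by
    have hdiff : L0 \ L ⊆ L0.filter (fun x => (L0.filter (x < ·)).card < K) := by
      intro x hx
      obtain ⟨hx0, hxL⟩ := Finset.mem_sdiff.mp hx
      rw [hL, Finset.mem_filter] at hxL
      push_neg at hxL
      exact Finset.mem_filter.mpr ⟨hx0, hxL hx0⟩
    -- the "above-count" map is injective on L0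
    have hmono : ∀ x ∈ L0, ∀ y ∈ L0, x < y →
        (L0.filter (y < ·)).card < (L0.filter (x < ·)).card := by
      intro x _ y hy hlt
      have hss : insert y (L0.filter (y < ·)) ⊆ L0.filter (x < ·) := by
        intro z hz
        rcases Finset.mem_insert.mp hz with rfl | hz
        · exact Finset.mem_filter.mpr ⟨hy, hlt⟩
        · obtain ⟨h1, h2⟩ := Finset.mem_filter.mp hz
          exact Finset.mem_filter.mpr ⟨h1, by omega⟩
      have := Finset.card_le_card hss
      rwa [Finset.card_insert_of_notMem (by simp)] at this
    have hinj : Set.InjOn (fun x => (L0.filter (x < ·)).card) L0 := by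
      intro x hx y hy hxy
      beta_reduce at hxy
      rcases lt_trichotomy x y with h | h | h
      · have := hmono x hx y hy h; omega
      · exact h
      · have := hmono y hy x hx h; omega
    have hcount : (L0.filter (fun x => (L0.filter (x < ·)).card < K)).card ≤ K := by
      have hmap : ∀ x ∈ L0.filter (fun x => (L0.filter (x < ·)).card < K),
          (L0.filter (x < ·)).card ∈ Finset.range K := by
        intro x hx
        exact Finset.mem_range.mpr (Finset.mem_filter.mp hx).2
      have := Finset.card_le_card_of_injOn _ hmap
        (hinj.mono (fun x hx => (Finset.mem_filter.mp hx).1))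
      simpa using this
    have h1 := Finset.card_le_card hdiff
    have h2 : (L0 \ L).card = L0.card - L.card := Finset.card_sdiff_of_subset hLL0
    have := Finset.card_le_card hLL0
    omega
  refine ⟨L, fun x hx => hL0A (hLL0 hx), hLcard,
    fun k => if h : k ≤ K then φ0 ⟨k, by omega⟩ else 0, ?_⟩
  intro B hBL hBK
  beta_reduce
  rw [dif_pos hBK]
  -- find T above B inside L0
  have hextend : ∃ S, S ⊆ L0 ∧ S.card = K ∧ bottomk B.card S = B := by
    by_cases hBne : B.Nonempty
    · set bm := B.max' hBne with hbm
      have hbmL : bm ∈ L := hBL (B.max'_mem hBne)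
      have habove : K ≤ (L0.filter (bm < ·)).card := (Finset.mem_filter.mp hbmL).2
      obtain ⟨T, hTsub, hTcard⟩ := Finset.exists_subset_card_eq
        (le_trans (by omega : K - B.card ≤ K) habove)
      have hdisjBT : Disjoint B T := by
        rw [Finset.disjoint_left]
        intro x hxB hxT
        have := (Finset.mem_filter.mp (hTsub hxT)).2
        have := B.le_max' x hxB
        omega
      refine ⟨B ∪ T, ?_, ?_, ?_⟩
      · intro x hx
        rcases Finset.mem_union.mp hx with hx | hx
        · exact hLL0 (hBL hx)
        · exact (Finset.mem_filter.mp (hTsub hx)).1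
      · rw [Finset.card_union_of_disjoint hdisjBT, hTcard]
        have : B.card ≤ K := hBK
        omega
      · apply bottomk_eq Finset.subset_union_left rfl
        intro b hb s hs hsB
        have hsT : s ∈ T := by
          rcases Finset.mem_union.mp hs with h | h
          · exact absurd h hsB
          · exact h
        have h1 := (Finset.mem_filter.mp (hTsub hsT)).2
        have h2 := B.le_max' b hb
        omega
    · rw [Finset.not_nonempty_iff_eq_empty] at hBne
      subst hBne
      obtain ⟨S, hSsub, hScard⟩ := Finset.exists_subset_card_eq
        (le_trans (by omega : K ≤ m + K) hL0card)
      refine ⟨S, hSsub, hScard, ?_⟩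
      simp [bottomk]
  obtain ⟨S, hSL0, hScard, hbot⟩ := hextend
  have := hφ0 S hSL0 hScard
  have : c' S ⟨B.card, by omega⟩ = φ0 ⟨B.card, by omega⟩ := by rw [this]
  rw [hc'] at this
  simp only at this
  rw [hbot] at this
  exact this


lemma fin2_ne {x y : Fin 2} (h : x ≠ y) : y = x + 1 := by
  fin_cases x <;> fin_cases y <;> simp_all

open Fin.NatCast Fin.CommRing in
lemma core_lemma (a1 a2 p1 p2 r : ℕ) (h1 : a1 = p1 * 2 ^ r) (h2 : a2 = p2 * 2 ^ r)
    (hp1 : Odd p1) (hp2 : Odd p2) (hle : a1 ≤ a2) (h : ℕ → Fin 2) :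
    ∃ z ≤ a1 + Nat.lcm (a2 - a1) (a1 + a2),
      h (z + a1) = h (z + a2) ∨ h z = h (z + (a1 + a2)) := by
  by_cases heq : a1 = a2
  · exact ⟨0, by omega, Or.inl (by rw [heq])⟩
  have hlt : a1 < a2 := by omega
  by_contra hcon
  push_neg at hcon
  set s := a2 - a1 with hs
  set q := a1 + a2 with hq
  set N := Nat.lcm s q with hN
  set C := a1 + N with hC
  have hs0 : 0 < s := by omega
  have ha2pos : 0 < a2 := by omega
  have hq0 : 0 < q := by omega
  have hcon' : ∀ z ≤ C, h (z + a1) ≠ h (z + a2) ∧ h z ≠ h (z + q) := by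
    intro z hz
    exact hcon z hz
  have hstep1 : ∀ k, k * s ≤ N → h (a1 + k * s) = h a1 + (k : Fin 2) := by
    intro k
    induction k with
    | zero => simp
    | succ k ihk =>
      intro hk
      have hks : k * s ≤ N := by
        have : k * s ≤ (k + 1) * s := by nlinarith
        omega
      have ih := ihk hks
      have hzC : k * s ≤ C := by omega
      have := (hcon' (k * s) hzC).1
      have he : h (k * s + a2) = h (k * s + a1) + 1 := fin2_ne this
      have e1 : k * s + a2 = a1 + (k + 1) * s := by
        have : a2 = a1 + s := by omega
        rw [this]; ring
      have e2 : k * s + a1 = a1 + k * s := by ring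
      rw [e1, e2] at he
      rw [he, ih]
      push_cast
      ring
  have hstep2 : ∀ k, k * q ≤ N → h (a1 + k * q) = h a1 + (k : Fin 2) := by
    intro k
    induction k with
    | zero => simp
    | succ k ihk =>
      intro hk
      have hkq : k * q ≤ N := by
        have : k * q ≤ (k + 1) * q := by nlinarith
        omega
      have ih := ihk hkq
      have hzC : a1 + k * q ≤ C := by omega
      have := (hcon' (a1 + k * q) hzC).2
      have he : h (a1 + k * q + q) = h (a1 + k * q) + 1 := fin2_ne this
      have e1 : a1 + k * q + q = a1 + (k + 1) * q := by ring
      rw [e1] at he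
      rw [he, ih]
      push_cast
      ring
  set d0 := Nat.gcd s q with hd0
  have hd0pos : 0 < d0 := Nat.gcd_pos_of_pos_left _ hs0
  have hds : d0 ∣ s := Nat.gcd_dvd_left _ _
  have hdq : d0 ∣ q := Nat.gcd_dvd_right _ _
  set k1 := N / s with hk1
  set k2 := N / q with hk2
  have hk1s : k1 * s = N := Nat.div_mul_cancel (Nat.dvd_lcm_left _ _)
  have hk2q : k2 * q = N := Nat.div_mul_cancel (Nat.dvd_lcm_right _ _)
  have heq1 : h (a1 + N) = h a1 + (k1 : Fin 2) := by rw [← hk1s]; exact hstep1 k1 (le_of_eq hk1s)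
  have heq2 : h (a1 + N) = h a1 + (k2 : Fin 2) := by rw [← hk2q]; exact hstep2 k2 (le_of_eq hk2q)
  have hcast : (k1 : Fin 2) = (k2 : Fin 2) := by
    have := heq1.symm.trans heq2
    exact add_left_cancel this
  have hpar : k1 % 2 = k2 % 2 := by
    have h1 := Fin.val_natCast (n := 2) k1
    have h2 := Fin.val_natCast (n := 2) k2
    rw [hcast] at h1
    omega
  -- k1 + k2 = (q + s)/d0 = 2 * a2 / d0
  have hglcm : d0 * N = s * q := Nat.gcd_mul_lcm s q
  obtain ⟨s', hs'⟩ := id hds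
  obtain ⟨q', hq'⟩ := id hdq
  have hNval : N = d0 * s' * q' := by
    have : d0 * N = (d0 * s') * (d0 * q') := by rw [← hs', ← hq']; exact hglcm
    have h2 : d0 * N = d0 * (d0 * s' * q') := by rw [this]; ring
    exact Nat.eq_of_mul_eq_mul_left hd0pos h2
  have hk1v : k1 = q' := by
    have : k1 * s = q' * s := by
      rw [hk1s, hNval, hs']; ring
    exact Nat.eq_of_mul_eq_mul_right hs0 this
  have hk2v : k2 = s' := by
    have : k2 * q = s' * q := by
      rw [hk2q, hNval, hq']; ring
    exact Nat.eq_of_mul_eq_mul_right hq0 this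
  have hsum : d0 * (s' + q') = 2 * a2 := by
    have : d0 * s' + d0 * q' = s + q := by rw [← hs', ← hq']
    have h2 : s + q = 2 * a2 := by omega
    calc d0 * (s' + q') = d0 * s' + d0 * q' := by ring
      _ = s + q := this
      _ = 2 * a2 := h2
  have heven : 2 ∣ (s' + q') := by
    rw [hk1v, hk2v] at hpar
    omega
  obtain ⟨v, hv⟩ := heven
  have hda2 : d0 ∣ a2 := by
    refine ⟨v, ?_⟩
    have : 2 * a2 = 2 * (d0 * v) := by rw [← hsum, hv]; ring
    omega
  have hda1 : d0 ∣ a1 := by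
    have := Nat.dvd_sub hdq hda2
    have hqa : q - a2 = a1 := by omega
    rwa [hqa] at this
  -- 2^(r+1) divides s and q, hence d0
  have hple : p1 ≤ p2 := by
    have := hlt
    rw [h1, h2] at this
    have hpow : 0 < 2 ^ r := Nat.pow_pos (by norm_num)
    exact le_of_lt (lt_of_mul_lt_mul_right this (le_of_lt hpow))
  have hpow : 0 < 2 ^ r := Nat.pow_pos (by norm_num)
  have hsval : s = (p2 - p1) * 2 ^ r := by
    rw [hs, h1, h2, ← Nat.sub_mul]
  have hqval : q = (p1 + p2) * 2 ^ r := by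
    rw [hq, h1, h2, ← Nat.add_mul]
  have hevensub : 2 ∣ (p2 - p1) := (Nat.Odd.sub_odd hp2 hp1).two_dvd
  have hevenadd : 2 ∣ (p1 + p2) := (Odd.add_odd hp1 hp2).two_dvd
  have hdvds : 2 ^ (r + 1) ∣ s := by
    obtain ⟨w, hw⟩ := hevensub
    exact ⟨w, by rw [hsval, hw, pow_succ]; ring⟩
  have hdvdq : 2 ^ (r + 1) ∣ q := by
    obtain ⟨w, hw⟩ := hevenadd
    exact ⟨w, by rw [hqval, hw, pow_succ]; ring⟩
  have hdvdd0 : 2 ^ (r + 1) ∣ d0 := Nat.dvd_gcd hdvds hdvdq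
  have hdvda1 : 2 ^ (r + 1) ∣ a1 := hdvdd0.trans hda1
  obtain ⟨w, hw⟩ := hdvda1
  have hp1even : p1 = 2 * w := by
    have : p1 * 2 ^ r = 2 ^ r * (2 * w) := by rw [← h1, hw, pow_succ]; ring
    have h2 : 2 ^ r * p1 = 2 ^ r * (2 * w) := by rw [← this]; ring
    exact Nat.eq_of_mul_eq_mul_left hpow h2
  rw [Nat.odd_iff] at hp1
  omega


open scoped symmDiff in
lemma main_aux (d a1 a2 t1 t2 p1 p2 r : ℕ)
    (ha1 : a1 = p1 * 2 ^ r) (ha2 : a2 = p2 * 2 ^ r)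
    (hp1 : Odd p1) (hp2 : Odd p2) (hle : a1 ≤ a2)
    (K1 K2 : Finset (Fin d)) (hK1 : K1.card = a1 + t1) (hK2 : K2.card = a2 + t2)
    (hdisj : Disjoint K1 K2) :
    IsRamsey 2 d (↑(K1.powersetCard a1) ∪ ↑(K2.powersetCard a2)) := by
  classical
  set b1 := a1 + t1 with hb1
  set b2 := a2 + t2 with hb2
  set q := a1 + a2 with hqdef
  set C := a1 + Nat.lcm (a2 - a1) (a1 + a2) with hCdef
  set K := t2 + C + q + a2 with hKdef
  set m := a2 + t2 + C + b1 + b2 with hmdef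
  obtain ⟨nR, hhom⟩ := homog K m
  refine ⟨nR + d, fun n hn c => ?_⟩
  have hnR : nR ≤ n := by omega
  set cNat : Finset ℕ → Fin 2 :=
    fun S => c ((S.filter (· < n)).attachFin (fun x hx => (Finset.mem_filter.mp hx).2)) with hcNat
  obtain ⟨L, hLsub, hLcard, φ, hφ⟩ := hhom (Finset.range nR) (by rw [Finset.card_range]) cNat
  have hLlt : ∀ x ∈ L, x < n :=
    fun x hx => lt_of_lt_of_le (Finset.mem_range.mp (hLsub hx)) hnR
  set Lfin : Finset (Fin n) := L.attachFin hLlt with hLfin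
  have hLfincard : Lfin.card = L.card := Finset.card_attachFin L hLlt
  have hLfinlt : ∀ x : Fin n, x ∈ Lfin → x.val < nR := by
    intro x hx
    rw [hLfin, Finset.mem_attachFin] at hx
    exact Finset.mem_range.mp (hLsub hx)
  -- key coloring fact
  have key : ∀ B : Finset (Fin n), B ⊆ Lfin → B.card ≤ K → c B = φ B.card := by
    intro B hB hBK
    have himsub : B.image Fin.val ⊆ L := by
      intro x hx
      obtain ⟨b, hb, rfl⟩ := Finset.mem_image.mp hx
      have := hB hb
      rwa [hLfin, Finset.mem_attachFin] at this
    have himcard : (B.image Fin.val).card = B.card :=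
      Finset.card_image_of_injective _ Fin.val_injective
    have h1 := hφ (B.image Fin.val) himsub (by rw [himcard]; exact hBK)
    have h2 : cNat (B.image Fin.val) = c B := by
      rw [hcNat]
      beta_reduce
      congr 1
      ext a
      rw [Finset.mem_attachFin, Finset.mem_filter, Finset.mem_image]
      constructor
      · rintro ⟨⟨b, hb, hba⟩, _⟩
        rwa [← Fin.val_injective hba]
      · intro ha
        exact ⟨⟨a, ha, rfl⟩, a.isLt⟩
    rw [← h2, h1, himcard]
  -- core lemma
  obtain ⟨z, hzC, hcase⟩ := core_lemma a1 a2 p1 p2 r ha1 ha2 hp1 hp2 hle (fun w => φ (t2 + w))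
  replace hcase := hcase
  -- choose disjoint pieces inside Lfin
  have hc1 : b1 ≤ Lfin.card := by omega
  obtain ⟨M1, hM1sub, hM1card⟩ := Finset.exists_subset_card_eq hc1
  have hc2 : b2 ≤ (Lfin \ M1).card := by
    rw [Finset.card_sdiff_of_subset hM1sub]; omega
  obtain ⟨M2, hM2sub, hM2card⟩ := Finset.exists_subset_card_eq hc2
  have hc3 : z + t2 ≤ ((Lfin \ M1) \ M2).card := by
    rw [Finset.card_sdiff_of_subset hM2sub, Finset.card_sdiff_of_subset hM1sub]
    omega
  obtain ⟨E, hEsub, hEcard⟩ := Finset.exists_subset_card_eq hc3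
  have hM2Lfin : M2 ⊆ Lfin := hM2sub.trans (Finset.sdiff_subset)
  have hELfin : E ⊆ Lfin := hEsub.trans ((Finset.sdiff_subset).trans Finset.sdiff_subset)
  have hdisjM21 : Disjoint M2 M1 := Finset.disjoint_of_subset_left hM2sub Finset.sdiff_disjoint
  have hdisjE1 : Disjoint E M1 :=
    Finset.disjoint_of_subset_left (hEsub.trans Finset.sdiff_subset) Finset.sdiff_disjoint
  have hdisjE2 : Disjoint E M2 := Finset.disjoint_of_subset_left hEsub Finset.sdiff_disjoint
  -- build σ
  have he1 : Fintype.card { x // x ∈ K1 } = Fintype.card { x // x ∈ M1 } := by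
    rw [Fintype.card_coe, Fintype.card_coe, hK1, hM1card]
  have he2 : Fintype.card { x // x ∈ K2 } = Fintype.card { x // x ∈ M2 } := by
    rw [Fintype.card_coe, Fintype.card_coe, hK2, hM2card]
  set e1 := Fintype.equivOfCardEq he1 with he1def
  set e2 := Fintype.equivOfCardEq he2 with he2def
  set σ : Fin d → Fin n := fun x =>
    if h : x ∈ K1 then (e1 ⟨x, h⟩ : Fin n)
    else if h2 : x ∈ K2 then (e2 ⟨x, h2⟩ : Fin n)
    else ⟨nR + x.val, by have := x.isLt; omega⟩ with hσdef
  have hσK1 : ∀ x (h : x ∈ K1), σ x ∈ M1 := by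
    intro x h
    rw [hσdef]
    simp only [dif_pos h]
    exact (e1 ⟨x, h⟩).2
  have hσK2 : ∀ x (h : x ∈ K2), σ x ∈ M2 := by
    intro x h
    have hx1 : x ∉ K1 := Finset.disjoint_right.mp hdisj h
    rw [hσdef]
    simp only [dif_neg hx1, dif_pos h]
    exact (e2 ⟨x, h⟩).2
  have hσout : ∀ x, x ∉ K1 → x ∉ K2 → (σ x).val = nR + x.val := by
    intro x h1 h2
    rw [hσdef]
    simp only [dif_neg h1, dif_neg h2]
  have hM1lt : ∀ y ∈ M1, (y : Fin n).val < nR := fun y hy => hLfinlt y (hM1sub hy)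
  have hM2lt : ∀ y ∈ M2, (y : Fin n).val < nR := fun y hy => hLfinlt y (hM2Lfin hy)
  have hσinj : Function.Injective σ := by
    intro x y hxy
    by_cases hx1 : x ∈ K1 <;> by_cases hy1 : y ∈ K1
    · have : e1 ⟨x, hx1⟩ = e1 ⟨y, hy1⟩ := by
        apply Subtype.coe_injective
        rw [hσdef] at hxy
        simpa [dif_pos hx1, dif_pos hy1] using hxy
      exact congrArg Subtype.val (e1.injective this)
    · exfalso
      by_cases hy2 : y ∈ K2
      · have h1 := hσK1 x hx1
        have h2 := hσK2 y hy2
        rw [hxy] at h1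
        exact Finset.disjoint_left.mp hdisjM21 h2 h1
      · have h1 := hM1lt _ (hσK1 x hx1)
        have h2 := hσout y hy1 hy2
        rw [hxy, h2] at h1
        omega
    · exfalso
      by_cases hx2 : x ∈ K2
      · have h1 := hσK2 x hx2
        have h2 := hσK1 y hy1
        rw [hxy] at h1
        exact Finset.disjoint_left.mp hdisjM21 h1 h2
      · have h1 := hM1lt _ (hσK1 y hy1)
        have h2 := hσout x hx1 hx2
        rw [← hxy, h2] at h1
        omega
    · by_cases hx2 : x ∈ K2 <;> by_cases hy2 : y ∈ K2
      · have : e2 ⟨x, hx2⟩ = e2 ⟨y, hy2⟩ := by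
          apply Subtype.coe_injective
          rw [hσdef] at hxy
          simpa [dif_neg hx1, dif_neg hy1, dif_pos hx2, dif_pos hy2] using hxy
        exact congrArg Subtype.val (e2.injective this)
      · exfalso
        have h1 := hM2lt _ (hσK2 x hx2)
        have h2 := hσout y hy1 hy2
        rw [hxy, h2] at h1
        omega
      · exfalso
        have h1 := hM2lt _ (hσK2 y hy2)
        have h2 := hσout x hx1 hx2
        rw [← hxy, h2] at h1
        omega
      · have h1 := hσout x hx1 hx2
        have h2 := hσout y hy1 hy2
        have : (σ x).val = (σ y).val := congrArg Fin.val hxy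
        rw [h1, h2] at this
        exact Fin.val_injective (by omega : x.val = y.val)
  -- embedding facts
  have hemb : ∀ Y : Finset (Fin n), IsCubeEmbedding (fun A => Y ∆ (A.image σ)) := by
    intro Y
    constructor
    · intro A B h
      simp only at h
      exact Finset.image_injective hσinj (symmDiff_right_injective Y h)
    · intro A B hcard
      simp only
      have hYY : (Y ∆ A.image σ) ∆ (Y ∆ B.image σ) = (A.image σ) ∆ (B.image σ) := by
        rw [symmDiff_symmDiff_symmDiff_comm, symmDiff_self, bot_symmDiff]
      rw [hYY, ← Finset.image_symmDiff A B hσinj,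
        Finset.card_image_of_injective _ hσinj, hcard]
  have himg1 : ∀ A : Finset (Fin d), A ⊆ K1 → A.image σ ⊆ M1 := by
    intro A hA x hx
    obtain ⟨y, hy, rfl⟩ := Finset.mem_image.mp hx
    exact hσK1 y (hA hy)
  have himg2 : ∀ A : Finset (Fin d), A ⊆ K2 → A.image σ ⊆ M2 := by
    intro A hA x hx
    obtain ⟨y, hy, rfl⟩ := Finset.mem_image.mp hx
    exact hσK2 y (hA hy)
  have himgcard : ∀ A : Finset (Fin d), (A.image σ).card = A.card :=
    fun A => Finset.card_image_of_injective _ hσinj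
  -- membership in F unfolding
  have hmemF : ∀ A : Finset (Fin d),
      A ∈ (↑(K1.powersetCard a1) ∪ ↑(K2.powersetCard a2) : Set (Finset (Fin d))) →
      (A ⊆ K1 ∧ A.card = a1) ∨ (A ⊆ K2 ∧ A.card = a2) := by
    intro A hA
    rcases hA with hA | hA
    · exact Or.inl (Finset.mem_powersetCard.mp hA)
    · exact Or.inr (Finset.mem_powersetCard.mp hA)
  rcases hcase with hc | hc
  · -- config 1 : Y = E
    refine ⟨φ (t2 + (z + a1)), (fun A => E ∆ (A.image σ)), hemb E, ?_⟩
    intro A hA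
    show c (E ∆ (A.image σ)) = φ (t2 + (z + a1))
    rcases hmemF A hA with ⟨hsub, hcard⟩ | ⟨hsub, hcard⟩
    · have hdisjY : Disjoint E (A.image σ) :=
        Finset.disjoint_of_subset_right (himg1 A hsub) hdisjE1
      rw [hdisjY.symmDiff_eq_sup]
      have hsubL : E ∪ A.image σ ⊆ Lfin :=
        Finset.union_subset hELfin ((himg1 A hsub).trans hM1sub)
      have hcardU : (E ∪ A.image σ).card = z + t2 + a1 := by
        rw [Finset.card_union_of_disjoint hdisjY, hEcard, himgcard, hcard]
      rw [show (E ⊔ A.image σ) = E ∪ A.image σ from rfl, key _ hsubL (by rw [hcardU]; omega),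
        hcardU]
      congr 1
      omega
    · have hdisjY : Disjoint E (A.image σ) :=
        Finset.disjoint_of_subset_right (himg2 A hsub) hdisjE2
      rw [hdisjY.symmDiff_eq_sup]
      have hsubL : E ∪ A.image σ ⊆ Lfin :=
        Finset.union_subset hELfin ((himg2 A hsub).trans hM2Lfin)
      have hcardU : (E ∪ A.image σ).card = z + t2 + a2 := by
        rw [Finset.card_union_of_disjoint hdisjY, hEcard, himgcard, hcard]
      rw [show (E ⊔ A.image σ) = E ∪ A.image σ from rfl, key _ hsubL (by rw [hcardU]; omega),
        hcardU, show z + t2 + a2 = t2 + (z + a2) from by omega, ← hc]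
  · -- config 2 : Y = M2 ∪ E' with |E'| = z
    have hzE : z ≤ E.card := by omega
    obtain ⟨E', hE'sub, hE'card⟩ := Finset.exists_subset_card_eq hzE
    set Y := M2 ∪ E' with hYdef
    have hdisjM2E' : Disjoint M2 E' :=
      Finset.disjoint_of_subset_right hE'sub hdisjE2.symm
    have hYcard : Y.card = b2 + z := by
      rw [hYdef, Finset.card_union_of_disjoint hdisjM2E', hM2card, hE'card]
    have hYLfin : Y ⊆ Lfin := Finset.union_subset hM2Lfin (hE'sub.trans hELfin)
    have hdisjY1 : Disjoint Y M1 := Finset.disjoint_union_left.mpr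
      ⟨hdisjM21, Finset.disjoint_of_subset_left hE'sub hdisjE1⟩
    refine ⟨φ (t2 + (z + q)), (fun A => Y ∆ (A.image σ)), hemb Y, ?_⟩
    intro A hA
    show c (Y ∆ (A.image σ)) = φ (t2 + (z + q))
    rcases hmemF A hA with ⟨hsub, hcard⟩ | ⟨hsub, hcard⟩
    · have hdisjYA : Disjoint Y (A.image σ) :=
        Finset.disjoint_of_subset_right (himg1 A hsub) hdisjY1
      rw [hdisjYA.symmDiff_eq_sup]
      have hsubL : Y ∪ A.image σ ⊆ Lfin :=
        Finset.union_subset hYLfin ((himg1 A hsub).trans hM1sub)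
      have hcardU : (Y ∪ A.image σ).card = b2 + z + a1 := by
        rw [Finset.card_union_of_disjoint hdisjYA, hYcard, himgcard, hcard]
      rw [show (Y ⊔ A.image σ) = Y ∪ A.image σ from rfl, key _ hsubL (by rw [hcardU]; omega),
        hcardU]
      congr 1
      omega
    · have hsubY : A.image σ ⊆ Y := (himg2 A hsub).trans Finset.subset_union_left
      have hsymm : Y ∆ (A.image σ) = Y \ (A.image σ) := by
        rw [symmDiff_def]
        have : (A.image σ) \ Y = ∅ := Finset.sdiff_eq_empty_iff_subset.mpr hsubY
        rw [show (A.image σ \ Y : Finset (Fin n)) = ∅ from this]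
        simp
      rw [hsymm]
      have hsubL : Y \ A.image σ ⊆ Lfin := Finset.sdiff_subset.trans hYLfin
      have hcardS : (Y \ A.image σ).card = t2 + z := by
        rw [Finset.card_sdiff_of_subset hsubY, hYcard, himgcard, hcard]
        omega
      rw [key _ hsubL (by rw [hcardS]; omega), hcardS, hc]

/-- Lemma 9(b) (2cliquesa:lem(b)): let `S = K_1 ∪ K_2` be the vertex disjoint union of
two cliques of weights `a1, a2` and orders `a1 + t1, a2 + t2`, with `a1 = p1·2^r1`,
`a2 = p2·2^r2`, `p1, p2` odd and `r1 ≤ r2`. If `r1 = r2` then `S` is `2`-Ramsey. -/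
theorem two_cliques_ramsey_of_eq_val (d a1 a2 t1 t2 p1 p2 r1 r2 : ℕ)
    (ha1 : a1 = p1 * 2 ^ r1) (ha2 : a2 = p2 * 2 ^ r2)
    (hp1 : Odd p1) (hp2 : Odd p2) (hr : r1 = r2)
    (K1 K2 : Finset (Fin d)) (hK1 : K1.card = a1 + t1) (hK2 : K2.card = a2 + t2)
    (hdisj : Disjoint K1 K2) :
    IsRamsey 2 d (↑(K1.powersetCard a1) ∪ ↑(K2.powersetCard a2)) := by
  subst hr
  rcases le_total a1 a2 with h | h
  · exact main_aux d a1 a2 t1 t2 p1 p2 r1 ha1 ha2 hp1 hp2 h K1 K2 hK1 hK2 hdisj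
  · have := main_aux d a2 a1 t2 t1 p2 p1 r1 ha2 ha1 hp2 hp1 h K2 K1 hK2 hK1 hdisj.symm
    rwa [Set.union_comm] at this
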